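/- arXiv:1511.06805 — 6 statements merged into one kernel-verified Lean document; each statement's English description precedes it below -/
import Mathlib

section
/- Let x ∈ (0,1), b = (1 + √(1 − x²))/x, s ≥ 0, and c = x²(2 − s·x + 3√(1 − x²)) / (4(3 − 2x² + 3√(1 − x²))). Then the function m(z) = (1 + x·z) − c(1 − z²) is strictly positive for all z ∈ (−1, 1). -/
theorem stmt_1 (x s : ℝ) (hx0 : 0 < x) (hx1 : x < 1) (hs : 0 ≤ s)
    (c : ℝ)
    (hc : c = x ^ 2 * (2 - s * x + 3 * Real.sqrt (1 - x ^ 2)) /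
      (4 * (3 - 2 * x ^ 2 + 3 * Real.sqrt (1 - x ^ 2)))) :
    ∀ z : ℝ, -1 < z → z < 1 → 0 < (1 + x * z) - c * (1 - z ^ 2) := by
  intro z hz1 hz2
  set q := Real.sqrt (1 - x ^ 2) with hq
  have hq0 : 0 ≤ q := Real.sqrt_nonneg _
  have hq1 : q ≤ 1 := by
    rw [hq]
    have : (1 : ℝ) - x ^ 2 ≤ 1 := by nlinarith
    calc Real.sqrt (1 - x ^ 2) ≤ Real.sqrt 1 := Real.sqrt_le_sqrt this
      _ = 1 := Real.sqrt_one
  have hD : 0 < 4 * (3 - 2 * x ^ 2 + 3 * q) := by nlinarith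
  have hc2 : c ≤ x / 2 := by
    rw [hc, div_le_div_iff₀ hD two_pos]
    nlinarith [mul_nonneg (mul_nonneg hs hx0.le) hx0.le,
      mul_nonneg hq0 (sub_nonneg.2 hx1.le)]
  rcases le_or_gt c 0 with h | h
  · nlinarith [mul_nonneg (neg_nonneg.2 h) (by nlinarith : (0:ℝ) ≤ 1 - z ^ 2),
      mul_lt_mul_of_pos_left hz1 hx0]
  · nlinarith [mul_nonneg h.le (sub_nonneg.2 hz2.le), mul_pos h (by linarith : (0:ℝ) < 1 + z)]
end

section
/- For any fixed s < 0, the function g(x) = 6 − 2x − 4x² + s·x² + (6 − 3x)√(1 − x²) is strictly monotone decreasing on [0,1], with g(0) = 12 > 0 and g(1) = s < 0; hence g has a unique root in (0,1). -/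
theorem stmt_3 (s : ℝ) (hs : s < 0) :
    StrictAntiOn
      (fun x : ℝ => 6 - 2 * x - 4 * x ^ 2 + s * x ^ 2 + (6 - 3 * x) * Real.sqrt (1 - x ^ 2))
      (Set.Icc 0 1) ∧
    (6 - 2 * (0:ℝ) - 4 * (0:ℝ) ^ 2 + s * (0:ℝ) ^ 2 + (6 - 3 * 0) * Real.sqrt (1 - (0:ℝ) ^ 2)
      = 12) ∧ (12:ℝ) > 0 ∧
    (6 - 2 * (1:ℝ) - 4 * (1:ℝ) ^ 2 + s * (1:ℝ) ^ 2 + (6 - 3 * 1) * Real.sqrt (1 - (1:ℝ) ^ 2)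
      = s) ∧ s < 0 ∧
    ∃! x : ℝ, x ∈ Set.Ioo (0:ℝ) 1 ∧
      6 - 2 * x - 4 * x ^ 2 + s * x ^ 2 + (6 - 3 * x) * Real.sqrt (1 - x ^ 2) = 0 := by
  set g : ℝ → ℝ :=
    fun x : ℝ => 6 - 2 * x - 4 * x ^ 2 + s * x ^ 2 + (6 - 3 * x) * Real.sqrt (1 - x ^ 2) with hg
  have hanti : StrictAntiOn g (Set.Icc 0 1) := by
    intro x hx y hy hxy
    obtain ⟨hx0, hx1⟩ := hx
    obtain ⟨hy0, hy1⟩ := hy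
    have hsq : Real.sqrt (1 - y ^ 2) ≤ Real.sqrt (1 - x ^ 2) := by
      apply Real.sqrt_le_sqrt; nlinarith
    have hprod : (6 - 3 * y) * Real.sqrt (1 - y ^ 2)
        ≤ (6 - 3 * x) * Real.sqrt (1 - x ^ 2) := by
      apply mul_le_mul (by linarith) hsq (Real.sqrt_nonneg _) (by linarith)
    have hyx : x ^ 2 ≤ y ^ 2 := by nlinarith
    have h2 : (s - 4) * y ^ 2 ≤ (s - 4) * x ^ 2 :=
      mul_le_mul_of_nonpos_left hyx (by linarith)
    simp only [hg]
    nlinarith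
  have hg0 : g 0 = 12 := by norm_num [hg, Real.sqrt_one]
  have hg1 : g 1 = s := by norm_num [hg]
  refine ⟨hanti, hg0, by norm_num, hg1, hs, ?_⟩
  have hcont : ContinuousOn g (Set.Icc 0 1) := by
    apply Continuous.continuousOn
    fun_prop
  have hmem : (0 : ℝ) ∈ Set.Ioo (g 1) (g 0) := by
    rw [hg0, hg1]; exact ⟨hs, by norm_num⟩
  obtain ⟨x, hx, hgx⟩ := intermediate_value_Ioo' (by norm_num : (0:ℝ) ≤ 1) hcont hmem
  refine ⟨x, ⟨hx, hgx⟩, ?_⟩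
  rintro y ⟨hy, hgy⟩
  exact hanti.injOn (Set.Ioo_subset_Icc_self hy) (Set.Ioo_subset_Icc_self hx)
    (hgy.trans hgx.symm)
end

section
/- For any s < 0, at x = 1/(s² + 2) the function g(x) = 6 − 2x − 4x² + s·x² + (6 − 3x)√(1 − x²) is strictly positive. -/
theorem stmt_4 (s : ℝ) (hs : s < 0) :
    0 < 6 - 2 * (1 / (s ^ 2 + 2)) - 4 * (1 / (s ^ 2 + 2)) ^ 2 + s * (1 / (s ^ 2 + 2)) ^ 2 +
      (6 - 3 * (1 / (s ^ 2 + 2))) * Real.sqrt (1 - (1 / (s ^ 2 + 2)) ^ 2) := by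
  have h2 : (0:ℝ) < s ^ 2 + 2 := by positivity
  set x := 1 / (s ^ 2 + 2) with hx
  have hxe : x * (s ^ 2 + 2) = 1 := by rw [hx]; field_simp
  have hxpos : 0 < x := by positivity
  have hxle : x ≤ 1 / 2 := by
    rw [hx]
    rw [div_le_div_iff₀ h2 (by norm_num)]
    nlinarith [sq_nonneg s]
  have key : 0 < 6 - 2 * x - 4 * x ^ 2 + s * x ^ 2 := by
    nlinarith [sq_nonneg s, sq_nonneg (s + 1), sq_nonneg (x * (s^2+2)), hxe, mul_pos hxpos hxpos]
  have hsq : 0 ≤ Real.sqrt (1 - x ^ 2) := Real.sqrt_nonneg _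
  have h6 : 0 ≤ 6 - 3 * x := by linarith
  nlinarith [mul_nonneg h6 hsq]
end

section
/- Let s < 0 and let z₀ be a real number with −1 < z₀ < (2 + s)/(s − 2). Then the limit as x → 1⁻ of m_x(z₀) equals (1/4)(1 + z₀)·((2 − s)·z₀ + (2 + s)), and this value is strictly negative. -/
theorem stmt_5 (s z₀ : ℝ) (hs : s < 0) (hz₀ : -1 < z₀) (hz₀' : z₀ < (2 + s) / (s - 2)) :
    Filter.Tendsto
      (fun x : ℝ => (1 + x * z₀) -
        (x ^ 2 * (2 - s * x + 3 * Real.sqrt (1 - x ^ 2)) /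
          (4 * (3 - 2 * x ^ 2 + 3 * Real.sqrt (1 - x ^ 2)))) * (1 - z₀ ^ 2))
      (nhdsWithin 1 (Set.Iio 1))
      (nhds ((1 / 4) * (1 + z₀) * ((2 - s) * z₀ + (2 + s)))) ∧
    (1 / 4) * (1 + z₀) * ((2 - s) * z₀ + (2 + s)) < 0 := by
  have hneg : (1 / 4) * (1 + z₀) * ((2 - s) * z₀ + (2 + s)) < 0 := by
    have hb : s - 2 < 0 := by linarith
    have h2 : (2 + s) < z₀ * (s - 2) := (lt_div_iff_of_neg hb).mp hz₀'
    nlinarith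
  refine ⟨?_, hneg⟩
  have hsq : Continuous fun x : ℝ => Real.sqrt (1 - x ^ 2) :=
    Real.continuous_sqrt.comp (by continuity)
  have h : ContinuousAt (fun x : ℝ => (1 + x * z₀) -
      (x ^ 2 * (2 - s * x + 3 * Real.sqrt (1 - x ^ 2)) /
        (4 * (3 - 2 * x ^ 2 + 3 * Real.sqrt (1 - x ^ 2)))) * (1 - z₀ ^ 2)) 1 := by
    apply ContinuousAt.sub
    · exact (continuousAt_const.add (continuous_id.mul continuous_const).continuousAt)
    apply ContinuousAt.mul _ continuousAt_const
    apply ContinuousAt.div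
    · exact ((continuous_pow 2).mul
        ((continuous_const.sub (continuous_const.mul continuous_id)).add
          (continuous_const.mul hsq))).continuousAt
    · exact (continuous_const.mul
        ((continuous_const.sub (continuous_const.mul (continuous_pow 2))).add
          (continuous_const.mul hsq))).continuousAt
    · norm_num
  have := h.tendsto.mono_left (nhdsWithin_le_nhds (s := Set.Iio 1))
  convert this using 2
  norm_num
  ring
end

section
/- Fix a real p > 0. The function k ↦ 4π√6·√(((2p+1)² − (2k+1)²)/((2p+1) + 2√((2p+1)² − (2k+1)²))) is strictly decreasing in k for 0 ≤ k < p. -/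
theorem stmt_17 (p : ℝ) (hp : 0 < p) :
    StrictAntiOn
      (fun k : ℝ => 4 * Real.pi * Real.sqrt 6 *
        Real.sqrt (((2 * p + 1) ^ 2 - (2 * k + 1) ^ 2) /
          ((2 * p + 1) + 2 * Real.sqrt ((2 * p + 1) ^ 2 - (2 * k + 1) ^ 2))))
      (Set.Ico (0:ℝ) p) := by
  intro a ha b hb hab
  obtain ⟨ha0, hap⟩ := ha
  obtain ⟨hb0, hbp⟩ := hb
  simp only
  set P := 2 * p + 1 with hP
  have hPpos : 0 < P := by positivity
  have hDa : 0 < P ^ 2 - (2 * a + 1) ^ 2 := by nlinarith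
  have hDb : 0 < P ^ 2 - (2 * b + 1) ^ 2 := by nlinarith
  have hDba : P ^ 2 - (2 * b + 1) ^ 2 < P ^ 2 - (2 * a + 1) ^ 2 := by nlinarith
  set s := Real.sqrt (P ^ 2 - (2 * a + 1) ^ 2) with hs
  set t := Real.sqrt (P ^ 2 - (2 * b + 1) ^ 2) with ht
  have hs2 : s ^ 2 = P ^ 2 - (2 * a + 1) ^ 2 := Real.sq_sqrt hDa.le
  have ht2 : t ^ 2 = P ^ 2 - (2 * b + 1) ^ 2 := Real.sq_sqrt hDb.le
  have hspos : 0 < s := Real.sqrt_pos.mpr hDa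
  have htpos : 0 < t := Real.sqrt_pos.mpr hDb
  have hts : t < s := Real.sqrt_lt_sqrt hDb.le hDba
  have hkey : (P ^ 2 - (2 * b + 1) ^ 2) / (P + 2 * t)
      < (P ^ 2 - (2 * a + 1) ^ 2) / (P + 2 * s) := by
    rw [div_lt_div_iff₀ (by positivity) (by positivity), ← hs2, ← ht2]
    nlinarith [mul_pos (sub_pos.mpr hts) (mul_pos hspos htpos),
      mul_pos (sub_pos.mpr hts) hPpos]
  have hsqrt : Real.sqrt ((P ^ 2 - (2 * b + 1) ^ 2) / (P + 2 * t))
      < Real.sqrt ((P ^ 2 - (2 * a + 1) ^ 2) / (P + 2 * s)) :=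
    Real.sqrt_lt_sqrt (by positivity) hkey
  have hc : 0 < 4 * Real.pi * Real.sqrt 6 := by positivity
  exact mul_lt_mul_of_pos_left hsqrt hc
end

section
/- Let g ≥ 2 be an integer and K ≥ 1 an integer, and suppose p > (1−g)²/k + 2k for every integer k with 1 ≤ k ≤ K. Then the function k ↦ 8π√3·[√((p² − k²)/(p + 2√(p² − k²))) + (1 − g)·√(1/(p + 2√(p² − k²)))] is strictly decreasing for integer k = 1, …, K. -/
theorem stmt_18 (g K : ℕ) (hg : 2 ≤ g) (hK : 1 ≤ K) (p : ℝ)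
    (hp : ∀ k : ℕ, 1 ≤ k → k ≤ K → p > ((1:ℝ) - g) ^ 2 / k + 2 * k) :
    ∀ k₁ k₂ : ℕ, 1 ≤ k₁ → k₁ < k₂ → k₂ ≤ K →
      8 * Real.pi * Real.sqrt 3 *
          (Real.sqrt ((p ^ 2 - (k₂:ℝ) ^ 2) / (p + 2 * Real.sqrt (p ^ 2 - (k₂:ℝ) ^ 2))) +
            ((1:ℝ) - g) * Real.sqrt (1 / (p + 2 * Real.sqrt (p ^ 2 - (k₂:ℝ) ^ 2)))) <
        8 * Real.pi * Real.sqrt 3 *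
          (Real.sqrt ((p ^ 2 - (k₁:ℝ) ^ 2) / (p + 2 * Real.sqrt (p ^ 2 - (k₁:ℝ) ^ 2))) +
            ((1:ℝ) - g) * Real.sqrt (1 / (p + 2 * Real.sqrt (p ^ 2 - (k₁:ℝ) ^ 2)))) := by
  intro k₁ k₂ hk₁ hlt hk₂
  have hgR : (2:ℝ) ≤ g := by exact_mod_cast hg
  set c : ℝ := (1:ℝ) - g with hc
  have hcneg : c ≤ -1 := by simp [hc]; linarith
  have hk₁R : (1:ℝ) ≤ (k₁:ℝ) := by exact_mod_cast hk₁
  have hk₂R : (1:ℝ) ≤ (k₂:ℝ) := by exact_mod_cast (le_trans hk₁ (le_of_lt hlt))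
  have hkk : (k₁:ℝ) < (k₂:ℝ) := by exact_mod_cast hlt
  -- p > 2k for each relevant k
  have hbig : ∀ k : ℕ, 1 ≤ k → k ≤ K → p > 2 * k := by
    intro k hk hkK
    have h := hp k hk hkK
    have hkR : (1:ℝ) ≤ (k:ℝ) := by exact_mod_cast hk
    have hcsq : (0:ℝ) < c ^ 2 := by nlinarith
    have : (0:ℝ) < c ^ 2 / k := div_pos hcsq (by linarith)
    linarith
  have hp1 : p > 2 * k₁ := hbig k₁ hk₁ (le_trans (le_of_lt hlt) hk₂)
  have hp2 : p > 2 * k₂ := hbig k₂ (le_trans hk₁ (le_of_lt hlt)) hk₂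
  have hppos : 0 < p := by linarith
  have hpos1 : 0 < p ^ 2 - (k₁:ℝ) ^ 2 := by nlinarith
  have hpos2 : 0 < p ^ 2 - (k₂:ℝ) ^ 2 := by nlinarith
  set s₁ : ℝ := Real.sqrt (p ^ 2 - (k₁:ℝ) ^ 2) with hs₁
  set s₂ : ℝ := Real.sqrt (p ^ 2 - (k₂:ℝ) ^ 2) with hs₂
  have hs₁nn : 0 ≤ s₁ := Real.sqrt_nonneg _
  have hs₂nn : 0 ≤ s₂ := Real.sqrt_nonneg _
  have hslt : s₂ < s₁ := by
    apply Real.sqrt_lt_sqrt (le_of_lt hpos2)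
    nlinarith
  set u₁ : ℝ := Real.sqrt (p + 2 * s₁) with hu₁
  set u₂ : ℝ := Real.sqrt (p + 2 * s₂) with hu₂
  have hd₁ : 0 < p + 2 * s₁ := by linarith
  have hd₂ : 0 < p + 2 * s₂ := by linarith
  have hu₁pos : 0 < u₁ := Real.sqrt_pos.mpr hd₁
  have hu₂pos : 0 < u₂ := Real.sqrt_pos.mpr hd₂
  have hult : u₂ < u₁ := Real.sqrt_lt_sqrt (le_of_lt hd₂) (by linarith)
  have hu₁sq : u₁ ^ 2 = p + 2 * s₁ := Real.sq_sqrt (le_of_lt hd₁)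
  have hu₂sq : u₂ ^ 2 = p + 2 * s₂ := Real.sq_sqrt (le_of_lt hd₂)
  -- rewrite the brackets
  have hrw : ∀ (x d : ℝ), 0 ≤ x → 0 < d →
      Real.sqrt (x / d) + c * Real.sqrt (1 / d) = (Real.sqrt x + c) / Real.sqrt d := by
    intro x d hx hd
    rw [Real.sqrt_div hx, one_div, Real.sqrt_inv, add_div]
    ring
  have e₂ : Real.sqrt ((p ^ 2 - (k₂:ℝ) ^ 2) / (p + 2 * s₂)) + c * Real.sqrt (1 / (p + 2 * s₂))
      = (s₂ + c) / u₂ := hrw _ _ (le_of_lt hpos2) hd₂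
  have e₁ : Real.sqrt ((p ^ 2 - (k₁:ℝ) ^ 2) / (p + 2 * s₁)) + c * Real.sqrt (1 / (p + 2 * s₁))
      = (s₁ + c) / u₁ := hrw _ _ (le_of_lt hpos1) hd₁
  rw [e₁, e₂]
  have hmain : (s₂ + c) / u₂ < (s₁ + c) / u₁ := by
    rw [div_lt_div_iff₀ hu₂pos hu₁pos]
    have h2s₁ : 2 * s₁ = u₁ ^ 2 - p := by linarith
    have h2s₂ : 2 * s₂ = u₂ ^ 2 - p := by linarith
    have hfac : 0 < (u₁ - u₂) * (u₁ * u₂ + p - 2 * c) := by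
      apply mul_pos (by linarith)
      have hmu := mul_pos hu₁pos hu₂pos
      linarith
    have hid : 2 * ((s₁ + c) * u₂ - (s₂ + c) * u₁)
        = (u₁ - u₂) * (u₁ * u₂ + p - 2 * c) := by
      linear_combination u₂ * h2s₁ - u₁ * h2s₂
    linarith
  have h8 : 0 < 8 * Real.pi * Real.sqrt 3 := by positivity
  exact mul_lt_mul_of_pos_left hmain h8
end
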